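/- arXiv:2408.00187 — 7 statements merged into one kernel-verified Lean document; each statement's English description precedes it below -/
import Mathlib

section
/- For real β with 0 ≤ β ≤ 1, real x ≤ 0, and real η with 0 < η ≤ sqrt(x(x−1)/3), the function φ(β,η,x) := (β−x)/((β−x)²+η²) + (1−β−x)/((1−β−x)²+η²) attains its minimum over β ∈ [0,1] at β = 1/2; that is, φ(β,η,x) ≥ φ(1/2,η,x) for all β ∈ [0,1]. -/
theorem phi_min_at_half (β η x : ℝ) (hβ0 : 0 ≤ β) (hβ1 : β ≤ 1) (hx : x ≤ 0)
    (hη0 : 0 < η) (hη : η ≤ Real.sqrt (x * (x - 1) / 3)) :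
    (1 / 2 - x) / ((1 / 2 - x) ^ 2 + η ^ 2) + (1 - 1 / 2 - x) / ((1 - 1 / 2 - x) ^ 2 + η ^ 2)
      ≤ (β - x) / ((β - x) ^ 2 + η ^ 2) + (1 - β - x) / ((1 - β - x) ^ 2 + η ^ 2) := by
  have hA : (0:ℝ) < (β - x) ^ 2 + η ^ 2 := by positivity
  have hB : (0:ℝ) < (1 - β - x) ^ 2 + η ^ 2 := by positivity
  have hC : (0:ℝ) < (1 / 2 - x) ^ 2 + η ^ 2 := by positivity
  have hC' : (0:ℝ) < (1 - 1 / 2 - x) ^ 2 + η ^ 2 := by positivity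
  have ht : 0 ≤ x * (x - 1) / 3 := by nlinarith
  have hη2 : 3 * η ^ 2 ≤ x * (x - 1) := by
    have h1 := Real.sq_sqrt ht
    have h2 : η ^ 2 ≤ (Real.sqrt (x * (x - 1) / 3)) ^ 2 :=
      pow_le_pow_left₀ hη0.le hη 2
    nlinarith
  have hd : (β - 1/2) ^ 2 ≤ 1/4 := by nlinarith
  have hkey : 0 ≤ 2 * (1/2 - x) *
      ((β - 1/2) ^ 2 * ((1/2 - x) ^ 2 - (β - 1/2) ^ 2 - 3 * η ^ 2)) := by
    apply mul_nonneg (by nlinarith)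
    exact mul_nonneg (sq_nonneg _) (by nlinarith)
  rw [div_add_div _ _ hC.ne' hC'.ne', div_add_div _ _ hA.ne' hB.ne',
    div_le_div_iff₀ (by positivity) (by positivity)]
  nlinarith [mul_nonneg hC.le hkey]
end

section
/- For real β with 0 ≤ β ≤ 1, real x ≤ 0, and real η with η > sqrt(x(x−1)/3), the function φ(β,η,x) := (β−x)/((β−x)²+η²) + (1−β−x)/((1−β−x)²+η²) satisfies φ(β,η,x) ≥ φ(0,η,x) for all β ∈ [0,1]. -/
theorem phi_min_at_zero (β η x : ℝ) (hβ0 : 0 ≤ β) (hβ1 : β ≤ 1) (hx : x ≤ 0)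
    (hη : Real.sqrt (x * (x - 1) / 3) < η) :
    (0 - x) / ((0 - x) ^ 2 + η ^ 2) + (1 - 0 - x) / ((1 - 0 - x) ^ 2 + η ^ 2)
      ≤ (β - x) / ((β - x) ^ 2 + η ^ 2) + (1 - β - x) / ((1 - β - x) ^ 2 + η ^ 2) := by
  have hm : 0 ≤ x * (x - 1) / 3 := by nlinarith [sq_nonneg x]
  have hη0 : 0 < η := lt_of_le_of_lt (Real.sqrt_nonneg _) hη
  have hs : x * (x - 1) / 3 < η ^ 2 := by
    nlinarith [Real.sq_sqrt hm, Real.sqrt_nonneg (x * (x - 1) / 3)]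
  have hA : (0:ℝ) < (β - x) ^ 2 + η ^ 2 := by positivity
  have hB : (0:ℝ) < (1 - β - x) ^ 2 + η ^ 2 := by positivity
  have hC : (0:ℝ) < (0 - x) ^ 2 + η ^ 2 := by positivity
  have hD : (0:ℝ) < (1 - 0 - x) ^ 2 + η ^ 2 := by positivity
  rw [div_add_div _ _ hC.ne' hD.ne', div_add_div _ _ hA.ne' hB.ne',
    div_le_div_iff₀ (by positivity) (by positivity)]
  have hb1 : 0 ≤ 1 - β := by linarith
  have h2x : 0 ≤ 1 - 2 * x := by linarith
  have ht : 0 ≤ 3 * η ^ 2 + x - x ^ 2 := by nlinarith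
  have hxm : x - x ^ 2 ≤ 0 := by nlinarith [sq_nonneg x]
  have hfac : 0 ≤ (3 * η ^ 2 + x - x ^ 2) / 3 - 4 * (x - x ^ 2) / 3 + 1 / 4 := by
    nlinarith [sq_nonneg η]
  have hsm : 0 ≤ η ^ 2 - (x - x ^ 2) := by nlinarith [sq_nonneg η]
  have H1 : 0 ≤ β * (1 - β) * (1 - 2 * x) * (3 * η ^ 2 + x - x ^ 2) *
      ((3 * η ^ 2 + x - x ^ 2) / 3 - 4 * (x - x ^ 2) / 3 + 1 / 4) :=
    mul_nonneg (mul_nonneg (mul_nonneg (mul_nonneg hβ0 hb1) h2x) ht) hfac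
  have H2 : 0 ≤ β * (1 - β) * (1 - 2 * x) * (β - 1 / 2) ^ 2 * (η ^ 2 - (x - x ^ 2)) :=
    mul_nonneg (mul_nonneg (mul_nonneg (mul_nonneg hβ0 hb1) h2x) (sq_nonneg _)) hsm
  nlinarith [H1, H2]
end

section
/- For real β with 0 ≤ β ≤ 1, real x ≤ 0, and real η with η > (1−2x)/(2√3), the function φ(β,η,x) := (β−x)/((β−x)²+η²) + (1−β−x)/((1−β−x)²+η²) satisfies φ(β,η,x) ≤ φ(1/2,η,x) for all β ∈ [0,1]. -/
theorem phi_max_at_half (β η x : ℝ) (hβ0 : 0 ≤ β) (hβ1 : β ≤ 1) (hx : x ≤ 0)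
    (hη : (1 - 2 * x) / (2 * Real.sqrt 3) < η) :
    (β - x) / ((β - x) ^ 2 + η ^ 2) + (1 - β - x) / ((1 - β - x) ^ 2 + η ^ 2)
      ≤ (1 / 2 - x) / ((1 / 2 - x) ^ 2 + η ^ 2) + (1 - 1 / 2 - x) / ((1 - 1 / 2 - x) ^ 2 + η ^ 2) := by
  have hs3 : Real.sqrt 3 ^ 2 = 3 := Real.sq_sqrt (by norm_num)
  have hs3pos : 0 < Real.sqrt 3 := Real.sqrt_pos.mpr (by norm_num)
  have hc : 0 < 1 / 2 - x := by linarith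
  have hη0 : 0 < η := lt_of_le_of_lt (div_nonneg (by linarith) (by positivity)) hη
  have hlt : 1 - 2 * x < η * (2 * Real.sqrt 3) :=
    (div_lt_iff₀ (by positivity)).mp hη
  have h3 : (1 / 2 - x) ^ 2 < 3 * η ^ 2 := by
    nlinarith [mul_pos hη0 hs3pos, sq_nonneg (η * Real.sqrt 3 - (1 / 2 - x))]
  have ha : (0:ℝ) < (β - x) ^ 2 + η ^ 2 := by positivity
  have hb : (0:ℝ) < (1 - β - x) ^ 2 + η ^ 2 := by positivity
  have hcd : (0:ℝ) < (1 / 2 - x) ^ 2 + η ^ 2 := by positivity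
  have hcd' : (0:ℝ) < (1 - 1 / 2 - x) ^ 2 + η ^ 2 := by positivity
  rw [div_add_div _ _ ha.ne' hb.ne', div_add_div _ _ hcd.ne' hcd'.ne',
    div_le_div_iff₀ (by positivity) (by positivity)]
  have key : ((1 / 2 - x) * ((1 - 1 / 2 - x) ^ 2 + η ^ 2) +
        (1 - 1 / 2 - x) * ((1 / 2 - x) ^ 2 + η ^ 2)) *
        (((β - x) ^ 2 + η ^ 2) * ((1 - β - x) ^ 2 + η ^ 2)) -
      ((β - x) * ((1 - β - x) ^ 2 + η ^ 2) + (1 - β - x) * ((β - x) ^ 2 + η ^ 2)) *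
        (((1 / 2 - x) ^ 2 + η ^ 2) * ((1 - 1 / 2 - x) ^ 2 + η ^ 2)) =
      ((1 / 2 - x) ^ 2 + η ^ 2) * (2 * (1 / 2 - x)) * (β - 1 / 2) ^ 2 *
        (3 * η ^ 2 + (β - 1 / 2) ^ 2 - (1 / 2 - x) ^ 2) := by ring
  nlinarith [mul_nonneg (mul_nonneg (mul_nonneg hcd.le (by linarith : (0:ℝ) ≤ 2 * (1/2 - x)))
      (sq_nonneg (β - 1/2))) (by nlinarith [sq_nonneg (β - 1/2)] : (0:ℝ) ≤ 3 * η ^ 2 + (β - 1/2) ^ 2 - (1/2 - x) ^ 2), key]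
end

section
/- For real x ≤ 0 and real u > (2−2x)/(2√3), the function u ↦ ∂φ/∂u(0,u,x) is increasing, where φ(0,u,x) = (−x)/(x²+u²) + (1−x)/((1−x)²+u²); equivalently, the second u-derivative 2x(x²−3u²)/(x²+u²)³ + 2(x−1)((x−1)²−3u²)/((x−1)²+u²)³ is positive for such u. -/
theorem phi_zero_second_deriv_pos (x u : ℝ) (hx : x ≤ 0)
    (hu : (2 - 2 * x) / (2 * Real.sqrt 3) < u) :
    deriv (deriv (fun v : ℝ => (-x) / (x ^ 2 + v ^ 2) + (1 - x) / ((1 - x) ^ 2 + v ^ 2))) u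
      = 2 * x * (x ^ 2 - 3 * u ^ 2) / (x ^ 2 + u ^ 2) ^ 3
        + 2 * (x - 1) * ((x - 1) ^ 2 - 3 * u ^ 2) / ((x - 1) ^ 2 + u ^ 2) ^ 3 ∧
    0 < 2 * x * (x ^ 2 - 3 * u ^ 2) / (x ^ 2 + u ^ 2) ^ 3
        + 2 * (x - 1) * ((x - 1) ^ 2 - 3 * u ^ 2) / ((x - 1) ^ 2 + u ^ 2) ^ 3 := by
  have s3 : (0:ℝ) < Real.sqrt 3 := Real.sqrt_pos.mpr (by norm_num)
  have hx1 : (0:ℝ) < 1 - x := by linarith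
  have hu0 : 0 < u := lt_of_le_of_lt (div_nonneg (by linarith) (by positivity)) hu
  have h3u : (1 - x) ^ 2 < 3 * u ^ 2 := by
    rw [div_lt_iff₀ (by positivity)] at hu
    nlinarith [Real.sq_sqrt (show (0:ℝ) ≤ 3 by norm_num), s3]
  have hd1 : x ^ 2 + u ^ 2 ≠ 0 := by positivity
  have hd2 : (1 - x) ^ 2 + u ^ 2 ≠ 0 := by positivity
  -- first derivative
  have hderiv : ∀ v : ℝ, 0 < v →
      HasDerivAt (fun v : ℝ => (-x) / (x ^ 2 + v ^ 2) + (1 - x) / ((1 - x) ^ 2 + v ^ 2))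
        (2 * x * v / (x ^ 2 + v ^ 2) ^ 2 + 2 * (x - 1) * v / ((1 - x) ^ 2 + v ^ 2) ^ 2) v := by
    intro v hv
    have hd1 : x ^ 2 + v ^ 2 ≠ 0 := by positivity
    have hd2 : (1 - x) ^ 2 + v ^ 2 ≠ 0 := by positivity
    have h1 : HasDerivAt (fun v : ℝ => x ^ 2 + v ^ 2) (2 * v) v := by
      simpa using (hasDerivAt_pow 2 v).const_add (x ^ 2)
    have h2 : HasDerivAt (fun v : ℝ => (1 - x) ^ 2 + v ^ 2) (2 * v) v := by
      simpa using (hasDerivAt_pow 2 v).const_add ((1 - x) ^ 2)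
    have t1 := (hasDerivAt_const v (-x)).div h1 hd1
    have t2 := (hasDerivAt_const v (1 - x)).div h2 hd2
    refine (t1.add t2).congr_deriv ?_
    field_simp
    ring
  set g : ℝ → ℝ := fun v => 2 * x * v / (x ^ 2 + v ^ 2) ^ 2 + 2 * (x - 1) * v / ((1 - x) ^ 2 + v ^ 2) ^ 2 with hg_def
  have hev : deriv (fun v : ℝ => (-x) / (x ^ 2 + v ^ 2) + (1 - x) / ((1 - x) ^ 2 + v ^ 2)) =ᶠ[nhds u] g := by
    filter_upwards [eventually_gt_nhds hu0] with v hv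
    exact (hderiv v hv).deriv
  have key : deriv (deriv (fun v : ℝ => (-x) / (x ^ 2 + v ^ 2) + (1 - x) / ((1 - x) ^ 2 + v ^ 2))) u = deriv g u :=
    hev.deriv_eq
  -- second derivative
  have hg : HasDerivAt g
      (2 * x * (x ^ 2 - 3 * u ^ 2) / (x ^ 2 + u ^ 2) ^ 3
        + 2 * (x - 1) * ((x - 1) ^ 2 - 3 * u ^ 2) / ((x - 1) ^ 2 + u ^ 2) ^ 3) u := by
    have h1 : HasDerivAt (fun v : ℝ => x ^ 2 + v ^ 2) (2 * u) u := by
      simpa using (hasDerivAt_pow 2 u).const_add (x ^ 2)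
    have h2 : HasDerivAt (fun v : ℝ => (1 - x) ^ 2 + v ^ 2) (2 * u) u := by
      simpa using (hasDerivAt_pow 2 u).const_add ((1 - x) ^ 2)
    have h1' : HasDerivAt (fun v : ℝ => (x ^ 2 + v ^ 2) ^ 2) (2 * (x ^ 2 + u ^ 2) ^ 1 * (2 * u)) u := by
      exact (h1.pow 2).congr_deriv (by norm_num)
    have h2' : HasDerivAt (fun v : ℝ => ((1 - x) ^ 2 + v ^ 2) ^ 2) (2 * ((1 - x) ^ 2 + u ^ 2) ^ 1 * (2 * u)) u := by
      exact (h2.pow 2).congr_deriv (by norm_num)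
    have n1 : HasDerivAt (fun v : ℝ => 2 * x * v) (2 * x) u := by
      simpa using (hasDerivAt_id u).const_mul (2 * x)
    have n2 : HasDerivAt (fun v : ℝ => 2 * (x - 1) * v) (2 * (x - 1)) u := by
      simpa using (hasDerivAt_id u).const_mul (2 * (x - 1))
    have t1 := n1.div h1' (pow_ne_zero 2 hd1)
    have t2 := n2.div h2' (pow_ne_zero 2 hd2)
    refine (t1.add t2).congr_deriv ?_
    have e1 : (x - 1) ^ 2 = (1 - x) ^ 2 := by ring
    rw [e1]
    field_simp
    ring
  have keq : deriv g u
      = 2 * x * (x ^ 2 - 3 * u ^ 2) / (x ^ 2 + u ^ 2) ^ 3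
        + 2 * (x - 1) * ((x - 1) ^ 2 - 3 * u ^ 2) / ((x - 1) ^ 2 + u ^ 2) ^ 3 := hg.deriv
  refine ⟨key.trans keq, ?_⟩
  have hxx : x ^ 2 < 3 * u ^ 2 := by nlinarith
  have hA : 0 ≤ 2 * x * (x ^ 2 - 3 * u ^ 2) / (x ^ 2 + u ^ 2) ^ 3 := by
    apply div_nonneg _ (by positivity)
    nlinarith
  have hB : 0 < 2 * (x - 1) * ((x - 1) ^ 2 - 3 * u ^ 2) / ((x - 1) ^ 2 + u ^ 2) ^ 3 := by
    apply div_pos _ (by positivity)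
    nlinarith
  linarith
end

section
/- For real β with 0 ≤ β ≤ 1, real x ≤ 0, and real u > 0, the u-partial derivative of φ(β,u,x) := (β−x)/((β−x)²+u²) + (1−β−x)/((1−β−x)²+u²) satisfies (−2+4x)/u³ ≤ ∂φ/∂u(β,u,x) ≤ 0. -/
lemma phi_term_hasDeriv (a u : ℝ) (hu : 0 < u) :
    HasDerivAt (fun v : ℝ => a / (a ^ 2 + v ^ 2)) (-(2 * a * u) / (a ^ 2 + u ^ 2) ^ 2) u := by
  have h1 : HasDerivAt (fun v : ℝ => a ^ 2 + v ^ 2) (2 * u) u := by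
    simpa using (hasDerivAt_pow 2 u).const_add (a ^ 2)
  have hne : a ^ 2 + u ^ 2 ≠ 0 := by positivity
  have : HasDerivAt (fun v : ℝ => a / (a ^ 2 + v ^ 2))
      ((0 * (a ^ 2 + u ^ 2) - a * (2 * u)) / (a ^ 2 + u ^ 2) ^ 2) u :=
    (hasDerivAt_const u a).fun_div h1 hne
  convert this using 1
  ring

lemma phi_term_bounds (a u : ℝ) (ha : 0 ≤ a) (hu : 0 < u) :
    -(2 * a) / u ^ 3 ≤ -(2 * a * u) / (a ^ 2 + u ^ 2) ^ 2 ∧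
      -(2 * a * u) / (a ^ 2 + u ^ 2) ^ 2 ≤ 0 := by
  have hden : (0:ℝ) < (a ^ 2 + u ^ 2) ^ 2 := by positivity
  constructor
  · rw [div_le_div_iff₀ (by positivity) hden]
    nlinarith [sq_nonneg a, sq_nonneg (a*u), mul_nonneg ha hu.le, sq_nonneg (a^2 - u^2),
      mul_nonneg (mul_nonneg ha ha) (mul_nonneg ha hu.le), pow_pos hu 3]
  · apply div_nonpos_of_nonpos_of_nonneg
    · nlinarith [mul_nonneg (mul_nonneg ha hu.le) (le_refl (0:ℝ))]
    · positivity

theorem phi_deriv_bounds (β x u : ℝ) (hβ0 : 0 ≤ β) (hβ1 : β ≤ 1) (hx : x ≤ 0) (hu : 0 < u) :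
    (-2 + 4 * x) / u ^ 3
      ≤ deriv (fun v : ℝ =>
          (β - x) / ((β - x) ^ 2 + v ^ 2) + (1 - β - x) / ((1 - β - x) ^ 2 + v ^ 2)) u ∧
    deriv (fun v : ℝ =>
        (β - x) / ((β - x) ^ 2 + v ^ 2) + (1 - β - x) / ((1 - β - x) ^ 2 + v ^ 2)) u ≤ 0 := by
  set a := β - x with ha'
  set b := 1 - β - x with hb'
  have ha : 0 ≤ a := by simp [ha']; linarith
  have hb : 0 ≤ b := by simp [hb']; linarith
  have hD : HasDerivAt (fun v : ℝ => a / (a ^ 2 + v ^ 2) + b / (b ^ 2 + v ^ 2))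
      (-(2 * a * u) / (a ^ 2 + u ^ 2) ^ 2 + -(2 * b * u) / (b ^ 2 + u ^ 2) ^ 2) u :=
    (phi_term_hasDeriv a u hu).add (phi_term_hasDeriv b u hu)
  rw [hD.deriv]
  obtain ⟨h1, h2⟩ := phi_term_bounds a u ha hu
  obtain ⟨h3, h4⟩ := phi_term_bounds b u hb hu
  have hsum : (-2 + 4 * x) / u ^ 3 = -(2 * a) / u ^ 3 + -(2 * b) / u ^ 3 := by
    rw [← add_div]; congr 1; rw [ha', hb']; ring
  constructor
  · rw [hsum]; linarith
  · linarith
end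

section
/- Let x < 0 and u > 1 − x. Then 0 ≤ [arctan(u/(1−x)) − arctan(u/x)] − [π − (1−2x)/u] ≤ ((1−x)³ − x³)/(3u³). -/
open Real

lemma arctan_le_self_aux {t : ℝ} (ht : 0 ≤ t) : Real.arctan t ≤ t := by
  have h : ∀ s ∈ Set.Icc (0:ℝ) t, HasDerivWithinAt (fun y => y - Real.arctan y)
      (1 - 1 / (1 + s ^ 2)) (Set.Icc 0 t) s := fun s _ =>
    ((hasDerivAt_id s).sub (Real.hasDerivAt_arctan s)).hasDerivWithinAt
  have mono : MonotoneOn (fun y => y - Real.arctan y) (Set.Icc 0 t) := by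
    apply monotoneOn_of_hasDerivWithinAt_nonneg (convex_Icc 0 t)
      (Continuous.continuousOn (by continuity)) (fun s hs => (h s (interior_subset hs)).mono interior_subset)
    intro s _
    have h1 : (0:ℝ) < 1 + s ^ 2 := by positivity
    have : 1 / (1 + s ^ 2) ≤ 1 := by
      rw [div_le_one h1]; nlinarith [sq_nonneg s]
    linarith
  have := mono (Set.left_mem_Icc.mpr ht) (Set.right_mem_Icc.mpr ht) ht
  simpa [Real.arctan_zero] using this

lemma self_sub_cube_le_arctan {t : ℝ} (ht : 0 ≤ t) : t - t ^ 3 / 3 ≤ Real.arctan t := by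
  have h : ∀ s : ℝ, HasDerivAt (fun y => Real.arctan y - (y - y ^ 3 / 3))
      (1 / (1 + s ^ 2) - (1 - s ^ 2)) s := by
    intro s
    have : HasDerivAt (fun y : ℝ => y - y ^ 3 / 3) (1 - 3 * s ^ 2 / 3) s := by
      simpa using (show HasDerivAt (fun y : ℝ => y - y ^ 3 / 3) _ s from (hasDerivAt_id' s).sub
        (((hasDerivAt_pow 3 s)).div_const 3))
    have := (show HasDerivAt (fun y => Real.arctan y - (y - y ^ 3 / 3)) _ s from (Real.hasDerivAt_arctan s).sub this)
    convert this using 1; ring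
  have mono : MonotoneOn (fun y => Real.arctan y - (y - y ^ 3 / 3)) (Set.Icc 0 t) := by
    apply monotoneOn_of_hasDerivWithinAt_nonneg (convex_Icc 0 t)
      (Continuous.continuousOn (by continuity))
      (fun s _ => (h s).hasDerivWithinAt)
    intro s _
    have h1 : (0:ℝ) < 1 + s ^ 2 := by positivity
    have : (1 - s ^ 2) ≤ 1 / (1 + s ^ 2) := by
      rw [le_div_iff₀ h1]; nlinarith [sq_nonneg (s^2)]
    linarith
  have := mono (Set.left_mem_Icc.mpr ht) (Set.right_mem_Icc.mpr ht) ht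
  simp only [Real.arctan_zero] at this
  linarith [this]

theorem arctan_diff_bounds (x u : ℝ) (hx : x < 0) (hu : 1 - x < u) :
    0 ≤ (Real.arctan (u / (1 - x)) - Real.arctan (u / x)) - (Real.pi - (1 - 2 * x) / u) ∧
    (Real.arctan (u / (1 - x)) - Real.arctan (u / x)) - (Real.pi - (1 - 2 * x) / u)
      ≤ ((1 - x) ^ 3 - x ^ 3) / (3 * u ^ 3) := by
  have hu0 : 0 < u := by linarith
  have h1x : 0 < 1 - x := by linarith
  set a : ℝ := (1 - x) / u with ha
  set b : ℝ := -x / u with hb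
  have ha0 : 0 ≤ a := by positivity
  have hb0 : 0 ≤ b := le_of_lt (div_pos (by linarith) hu0)
  have e1 : Real.arctan (u / (1 - x)) = π / 2 - Real.arctan a := by
    have : u / (1 - x) = a⁻¹ := by rw [ha, inv_div]
    rw [this, Real.arctan_inv_of_pos (by positivity)]
  have e2 : Real.arctan (u / x) = -(π / 2) + Real.arctan b := by
    have hxu : x / u < 0 := div_neg_of_neg_of_pos hx hu0
    have h1 : u / x = (x / u)⁻¹ := by rw [inv_div]
    have h2 : b = -(x / u) := by rw [hb]; ring
    rw [h1, Real.arctan_inv_of_neg hxu, h2, Real.arctan_neg]; ring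
  rw [e1, e2]
  have key : (1 - 2 * x) / u = a + b := by rw [ha, hb]; ring
  have l1 := arctan_le_self_aux ha0
  have l2 := arctan_le_self_aux hb0
  have l3 := self_sub_cube_le_arctan ha0
  have l4 := self_sub_cube_le_arctan hb0
  have cube : ((1 - x) ^ 3 - x ^ 3) / (3 * u ^ 3) = a ^ 3 / 3 + b ^ 3 / 3 := by
    rw [ha, hb]; field_simp; ring
  constructor
  · rw [key]; linarith
  · rw [key, cube]; linarith
end

section
/- Let K ≥ 18 be an integer and δ < 0 a real number. Suppose ψ(u) = Σ_{k ≤ u} Λ(k) (Chebyshev function, Λ the von Mangoldt function) satisfies u(1 − 2.85/log K) ≤ ψ(u) ≤ u(1 + 2.85/log K) for all u ≥ K. Then the tail Σ_{k > K} Λ(k)/k^{1−δ} is at most (K^δ/δ)·(2.85·(2δ−1)/log K − 1) in absolute value; i.e., |Σ_{k>K} Λ(k) k^{δ−1}| < (K^δ/δ)(2.85(2δ−1)/log K − 1). -/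
open ArithmeticFunction MeasureTheory Finset intervalIntegral

private lemma psi01 (n : ℕ) :
    ∑ k ∈ Finset.Icc 0 n, (Λ k : ℝ) = ∑ k ∈ Finset.Icc 1 n, (Λ k : ℝ) := by
  rw [Finset.Icc_eq_cons_Ioc (Nat.zero_le n), Finset.sum_cons, ArithmeticFunction.map_zero,
    zero_add]
  congr 1

private lemma alg_id (A B L R j2 j3 δ : ℝ) (hδ : δ ≠ 0) (hL : L ≠ 0) :
    A / δ * (2.85 * (2 * δ - 1) / L - 1)
      - (1 - δ) * ((1 + 2.85 / L) * (((B - A) / δ - j3) - R * j2))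
      - ((1 + 2.85 / L) * B - (1 - 2.85 / L) * A
        - ((δ - 1) * (R * (1 + 2.85 / L)) * j2 + (δ - 1) * (1 + 2.85 / L) * j3))
      = -((1 + 2.85 / L) * B / δ) := by
  field_simp
  ring

set_option maxHeartbeats 2000000 in
private lemma key_bound (K : ℕ) (hK : 18 ≤ K) (δ : ℝ) (hδ : δ < 0)
    (hψ : ∀ u : ℝ, (K : ℝ) ≤ u →
      u * (1 - 2.85 / Real.log K) ≤ ∑ k ∈ Finset.Icc 1 ⌊u⌋₊, Λ k ∧
      ∑ k ∈ Finset.Icc 1 ⌊u⌋₊, Λ k ≤ u * (1 + 2.85 / Real.log K))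
    (b : ℝ) (hb : (K : ℝ) + 1 ≤ b) :
    ∑ k ∈ Finset.Ioc K ⌊b⌋₊, (k : ℝ) ^ (δ - 1) * Λ k ≤
      (K : ℝ) ^ δ / δ * (2.85 * (2 * δ - 1) / Real.log K - 1)
        - (1 - δ) * ((1 + 2.85 / Real.log K) *
            ∫ t in (K : ℝ)..((K : ℝ) + 1), (t - (K : ℝ)) * t ^ (δ - 2)) := by
  set c : ℝ := 2.85 / Real.log K with hc
  set P : ℝ → ℝ := fun t => ∑ k ∈ Finset.Icc 0 ⌊t⌋₊, (Λ k : ℝ) with hP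
  have hK18 : (18 : ℝ) ≤ (K : ℝ) := by exact_mod_cast hK
  have hKpos : (0 : ℝ) < K := by linarith
  have hlog : 0 < Real.log K := Real.log_pos (by linarith)
  have hcpos : 0 < c := by positivity
  have hKb : (K : ℝ) ≤ b := by linarith
  have hbpos : 0 < b := by linarith
  have hfloorK : ⌊(K : ℝ)⌋₊ = K := Nat.floor_natCast K
  -- bounds on P
  have hPnonneg : ∀ t : ℝ, 0 ≤ P t :=
    fun t => Finset.sum_nonneg fun k _ => vonMangoldt_nonneg
  have hPle : ∀ t : ℝ, (K : ℝ) ≤ t → P t ≤ t * (1 + c) := by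
    intro t ht
    rw [hP]
    simp only
    rw [psi01]
    exact (hψ t ht).2
  have hPK : (K : ℝ) * (1 - c) ≤ ∑ k ∈ Finset.Icc 0 K, (Λ k : ℝ) := by
    rw [psi01]
    have := (hψ (K : ℝ) le_rfl).1
    rwa [hfloorK] at this
  have hPKle : ∑ k ∈ Finset.Icc 0 K, (Λ k : ℝ) ≤ (K : ℝ) * (1 + c) := by
    rw [psi01]
    have := (hψ (K : ℝ) le_rfl).2
    rwa [hfloorK] at this
  have hPmono : Monotone P := fun s t hst =>
    Finset.sum_le_sum_of_subset_of_nonneg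
      (Finset.Icc_subset_Icc_right (Nat.floor_mono hst))
      (fun k _ _ => vonMangoldt_nonneg)
  -- Abel summation
  have hdiff : ∀ t ∈ Set.Icc (K : ℝ) b, DifferentiableAt ℝ (fun t : ℝ => t ^ (δ - 1)) t := by
    intro t ht
    exact (Real.hasDerivAt_rpow_const (p := δ - 1)
      (Or.inl (by nlinarith [ht.1] : t ≠ 0))).differentiableAt
  have htpos : ∀ t : ℝ, t ∈ Set.Icc (K : ℝ) b → (0:ℝ) < t := fun t ht => by linarith [ht.1]
  have hderiv : ∀ t : ℝ, 0 < t →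
      deriv (fun t : ℝ => t ^ (δ - 1)) t = (δ - 1) * t ^ (δ - 2) := by
    intro t ht
    rw [Real.deriv_rpow_const t (δ - 1), show δ - 1 - 1 = δ - 2 by ring]
  have hcont : ∀ (s : Set ℝ), (∀ x ∈ s, x ≠ 0) →
      ContinuousOn (fun t : ℝ => (δ - 1) * t ^ (δ - 2)) s := by
    intro s hs
    exact continuousOn_const.mul (ContinuousOn.rpow_const continuousOn_id
      (fun x hx => Or.inl (hs x hx)))
  have hint : IntegrableOn (deriv (fun t : ℝ => t ^ (δ - 1))) (Set.Icc (K : ℝ) b) := by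
    apply IntegrableOn.congr_fun
      (g := deriv (fun t : ℝ => t ^ (δ - 1)))
      (f := fun t : ℝ => (δ - 1) * t ^ (δ - 2))
    · exact ContinuousOn.integrableOn_Icc (hcont _ (fun x hx => (htpos x hx).ne'))
    · intro t ht
      exact (hderiv t (htpos t ht)).symm
    · exact measurableSet_Icc
  have habel := sum_mul_eq_sub_sub_integral_mul (fun k => (Λ k : ℝ))
      (f := fun t : ℝ => t ^ (δ - 1)) hKpos.le hKb hdiff hint
  rw [hfloorK] at habel
  have habel' : ∑ k ∈ Finset.Ioc K ⌊b⌋₊, (k : ℝ) ^ (δ - 1) * Λ k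
      = b ^ (δ - 1) * P b - (K : ℝ) ^ (δ - 1) * (∑ k ∈ Finset.Icc 0 K, (Λ k : ℝ))
        - ∫ t in Set.Ioc (K : ℝ) b, deriv (fun t : ℝ => t ^ (δ - 1)) t * P t := habel
  have hK1b : (K:ℝ) + 1 ≤ b := hb
  have hKK1 : (K:ℝ) ≤ (K:ℝ) + 1 := by linarith
  -- rewrite the integral as an interval integral with explicit derivative
  have hI : (∫ t in Set.Ioc (K : ℝ) b, deriv (fun t : ℝ => t ^ (δ - 1)) t * P t)
      = ∫ t in (K : ℝ)..b, (δ - 1) * t ^ (δ - 2) * P t := by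
    rw [← intervalIntegral.integral_of_le hKb]
    apply intervalIntegral.integral_congr
    intro t ht
    rw [Set.uIcc_of_le hKb] at ht
    simp only
    rw [hderiv t (htpos t ht)]
  -- integrability of the integrand on subintervals
  have hGint : ∀ a' b' : ℝ, (K:ℝ) ≤ a' → (K:ℝ) ≤ b' →
      IntervalIntegrable (fun t : ℝ => (δ - 1) * t ^ (δ - 2) * P t) volume a' b' := by
    intro a' b' ha' hb'
    have hmono : MonotoneOn P (Set.uIcc a' b') := hPmono.monotoneOn _
    refine IntervalIntegrable.continuousOn_mul hmono.intervalIntegrable (hcont _ ?_)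
    intro x hx
    have hxK : (K:ℝ) ≤ x := le_trans (le_inf ha' hb') hx.1
    exact (lt_of_lt_of_le hKpos hxK).ne'
  have hcontid : ∀ (s : Set ℝ), (∀ x ∈ s, x ≠ 0) → ∀ r : ℝ,
      ContinuousOn (fun t : ℝ => t ^ (r : ℝ)) s := by
    intro s hs r
    exact ContinuousOn.rpow_const continuousOn_id (fun x hx => Or.inl (hs x hx))
  have hne1 : ∀ x ∈ Set.uIcc (K:ℝ) ((K:ℝ)+1), x ≠ 0 := by
    intro x hx
    rw [Set.uIcc_of_le hKK1] at hx
    nlinarith [hx.1]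
  have hne2 : ∀ x ∈ Set.uIcc ((K:ℝ)+1) b, x ≠ 0 := by
    intro x hx
    rw [Set.uIcc_of_le hK1b] at hx
    nlinarith [hx.1]
  have hne3 : ∀ x ∈ Set.uIcc (K:ℝ) b, x ≠ 0 := by
    intro x hx
    rw [Set.uIcc_of_le hKb] at hx
    nlinarith [hx.1]
  -- split the integral
  have hsplit : (∫ t in (K : ℝ)..b, (δ - 1) * t ^ (δ - 2) * P t)
      = (∫ t in (K : ℝ)..((K:ℝ)+1), (δ - 1) * t ^ (δ - 2) * P t)
        + ∫ t in ((K:ℝ)+1)..b, (δ - 1) * t ^ (δ - 2) * P t :=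
    (intervalIntegral.integral_add_adjacent_intervals
      (hGint _ _ le_rfl (by linarith)) (hGint _ _ (by linarith) (by linarith))).symm
  -- lower bound on [K, K+1]
  have hmono1 : (∫ t in (K : ℝ)..((K:ℝ)+1), (δ - 1) * ((K:ℝ) * (1 + c)) * t ^ (δ - 2))
      ≤ ∫ t in (K : ℝ)..((K:ℝ)+1), (δ - 1) * t ^ (δ - 2) * P t := by
    apply intervalIntegral.integral_mono_ae_restrict hKK1
      (((continuousOn_const.mul (hcontid _ hne1 _))).intervalIntegrable)
      (hGint _ _ le_rfl (by linarith))
    rw [show volume.restrict (Set.Icc (K:ℝ) ((K:ℝ)+1))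
        = volume.restrict (Set.Ico (K:ℝ) ((K:ℝ)+1)) from
      Measure.restrict_congr_set Ico_ae_eq_Icc.symm]
    filter_upwards [self_mem_ae_restrict measurableSet_Ico] with t ht
    have hfl : ⌊t⌋₊ = K := by
      rw [Nat.floor_eq_iff (le_trans hKpos.le ht.1)]
      exact ⟨ht.1, ht.2⟩
    have hPt : P t ≤ (K:ℝ) * (1 + c) := by
      rw [hP]; simp only [hfl]; exact hPKle
    have htp : (0:ℝ) < t := lt_of_lt_of_le hKpos ht.1
    have hneg : (δ - 1) * t ^ (δ - 2) ≤ 0 :=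
      mul_nonpos_of_nonpos_of_nonneg (by linarith) (Real.rpow_nonneg htp.le _)
    calc (δ - 1) * ((K:ℝ) * (1 + c)) * t ^ (δ - 2)
        = ((δ - 1) * t ^ (δ - 2)) * ((K:ℝ) * (1 + c)) := by ring
      _ ≤ ((δ - 1) * t ^ (δ - 2)) * P t := mul_le_mul_of_nonpos_left hPt hneg
      _ = (δ - 1) * t ^ (δ - 2) * P t := by ring
  -- lower bound on [K+1, b]
  have hmono2 : (∫ t in ((K:ℝ)+1)..b, (δ - 1) * (1 + c) * t ^ (δ - 1))
      ≤ ∫ t in ((K:ℝ)+1)..b, (δ - 1) * t ^ (δ - 2) * P t := by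
    apply intervalIntegral.integral_mono_on hK1b
      ((continuousOn_const.mul (hcontid _ hne2 _)).intervalIntegrable)
      (hGint _ _ (by linarith) (by linarith))
    intro t ht
    have htK : (K:ℝ) ≤ t := by linarith [ht.1]
    have htp : (0:ℝ) < t := lt_of_lt_of_le hKpos htK
    have hneg : (δ - 1) * t ^ (δ - 2) ≤ 0 :=
      mul_nonpos_of_nonpos_of_nonneg (by linarith) (Real.rpow_nonneg htp.le _)
    have hrpow : t ^ (δ - 1) = t ^ (δ - 2) * t := by
      rw [show δ - 1 = (δ - 2) + 1 by ring, Real.rpow_add_one htp.ne']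
    calc (δ - 1) * (1 + c) * t ^ (δ - 1)
        = ((δ - 1) * t ^ (δ - 2)) * (t * (1 + c)) := by rw [hrpow]; ring
      _ ≤ ((δ - 1) * t ^ (δ - 2)) * P t := mul_le_mul_of_nonpos_left (hPle t htK) hneg
      _ = (δ - 1) * t ^ (δ - 2) * P t := by ring
  -- evaluate / relate integrals
  have hrpow_split : ∀ t : ℝ, 0 < t → t ^ (δ - 1) = t ^ (δ - 2) * t := by
    intro t htp
    rw [show δ - 1 = (δ - 2) + 1 by ring, Real.rpow_add_one htp.ne']
  have hEeq : (∫ t in (K : ℝ)..((K:ℝ)+1), (t - (K:ℝ)) * t ^ (δ - 2))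
      = (∫ t in (K : ℝ)..((K:ℝ)+1), t ^ (δ - 1))
        - (K:ℝ) * ∫ t in (K : ℝ)..((K:ℝ)+1), t ^ (δ - 2) := by
    rw [← intervalIntegral.integral_const_mul,
      ← intervalIntegral.integral_sub (g := fun t : ℝ => (K:ℝ) * t ^ (δ - 2))
        ((hcontid _ hne1 (δ-1)).intervalIntegrable)
        ((continuousOn_const.mul (hcontid _ hne1 (δ-2))).intervalIntegrable)]
    apply intervalIntegral.integral_congr
    intro t ht
    rw [Set.uIcc_of_le hKK1] at ht
    have htp : (0:ℝ) < t := lt_of_lt_of_le hKpos ht.1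
    simp only
    rw [hrpow_split t htp]
    ring
  have hJ13 : (∫ t in (K : ℝ)..((K:ℝ)+1), t ^ (δ - 1))
      + (∫ t in ((K:ℝ)+1)..b, t ^ (δ - 1)) = ∫ t in (K : ℝ)..b, t ^ (δ - 1) :=
    intervalIntegral.integral_add_adjacent_intervals
      ((hcontid _ hne1 (δ-1)).intervalIntegrable)
      ((hcontid _ hne2 (δ-1)).intervalIntegrable)
  have hJval : (∫ t in (K : ℝ)..b, t ^ (δ - 1)) = (b ^ δ - (K:ℝ) ^ δ) / δ := by
    rw [integral_rpow (Or.inr ⟨by intro h; exact hδ.ne (by linarith),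
      Set.notMem_uIcc_of_lt hKpos hbpos⟩)]
    rw [show δ - 1 + 1 = δ by ring]
  have hE2 : (∫ t in (K : ℝ)..((K:ℝ)+1), (t - (K:ℝ)) * t ^ (δ - 2))
      = ((b ^ δ - (K:ℝ) ^ δ) / δ - (∫ t in ((K:ℝ)+1)..b, t ^ (δ - 1)))
        - (K:ℝ) * ∫ t in (K : ℝ)..((K:ℝ)+1), t ^ (δ - 2) := by
    rw [hEeq]
    have := hJ13.trans hJval
    linarith
  -- endpoint bounds
  have hBpos : 0 < b ^ δ := Real.rpow_pos_of_pos hbpos δ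
  have hfb : b ^ (δ - 1) * P b ≤ (1 + c) * b ^ δ := by
    calc b ^ (δ - 1) * P b ≤ b ^ (δ - 1) * (b * (1 + c)) :=
          mul_le_mul_of_nonneg_left (hPle b hKb) (Real.rpow_nonneg hbpos.le _)
      _ = (1 + c) * b ^ δ := by
          rw [show δ = (δ - 1) + 1 by ring, Real.rpow_add_one hbpos.ne']
          ring
  have hfK : (1 - c) * (K:ℝ) ^ δ ≤ (K:ℝ) ^ (δ - 1) * ∑ k ∈ Finset.Icc 0 K, (Λ k : ℝ) := by
    calc (1 - c) * (K:ℝ) ^ δ = (K:ℝ) ^ (δ - 1) * ((K:ℝ) * (1 - c)) := by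
          rw [show δ = (δ - 1) + 1 by ring, Real.rpow_add_one hKpos.ne']
          ring
      _ ≤ (K:ℝ) ^ (δ - 1) * ∑ k ∈ Finset.Icc 0 K, (Λ k : ℝ) :=
          mul_le_mul_of_nonneg_left hPK (Real.rpow_nonneg hKpos.le _)
  -- factored lower bounds for the two pieces of the integral
  rw [intervalIntegral.integral_const_mul] at hmono1
  rw [intervalIntegral.integral_const_mul] at hmono2
  -- final algebraic step
  have hlast : (1 + c) * b ^ δ - (1 - c) * (K:ℝ) ^ δ
      - ((δ - 1) * ((K:ℝ) * (1 + c)) * (∫ t in (K : ℝ)..((K:ℝ)+1), t ^ (δ - 2))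
          + (δ - 1) * (1 + c) * (∫ t in ((K:ℝ)+1)..b, t ^ (δ - 1)))
      ≤ (K : ℝ) ^ δ / δ * (2.85 * (2 * δ - 1) / Real.log K - 1)
        - (1 - δ) * ((1 + c) *
            (((b ^ δ - (K:ℝ) ^ δ) / δ - (∫ t in ((K:ℝ)+1)..b, t ^ (δ - 1)))
              - (K:ℝ) * ∫ t in (K : ℝ)..((K:ℝ)+1), t ^ (δ - 2))) := by
    set j2 : ℝ := ∫ t in (K : ℝ)..((K:ℝ)+1), t ^ (δ - 2) with hj2
    set j3 : ℝ := ∫ t in ((K:ℝ)+1)..b, t ^ (δ - 1) with hj3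
    have hq : (K : ℝ) ^ δ / δ * (2.85 * (2 * δ - 1) / Real.log K - 1)
        - (1 - δ) * ((1 + c) * (((b ^ δ - (K:ℝ) ^ δ) / δ - j3) - (K:ℝ) * j2))
        - ((1 + c) * b ^ δ - (1 - c) * (K:ℝ) ^ δ
          - ((δ - 1) * ((K:ℝ) * (1 + c)) * j2 + (δ - 1) * (1 + c) * j3))
        = -((1 + c) * b ^ δ / δ) := by
      rw [hc]
      exact alg_id ((K:ℝ) ^ δ) (b ^ δ) (Real.log K) (K:ℝ) j2 j3 δ hδ.ne hlog.ne' 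
    have hneg : 0 < -((1 + c) * b ^ δ / δ) := by
      rw [neg_pos]
      exact div_neg_of_pos_of_neg (by positivity) hδ
    linarith
  rw [habel', hI, hsplit, hE2]
  linarith [hfb, hfK, hmono1, hmono2, hlast]


private lemma Dpos (K : ℕ) (hK : 18 ≤ K) (δ : ℝ) (hδ : δ < 0) :
    0 < ∫ t in (K : ℝ)..((K : ℝ) + 1), (t - (K : ℝ)) * t ^ (δ - 2) := by
  have hK18 : (18 : ℝ) ≤ (K : ℝ) := by exact_mod_cast hK
  have hKpos : (0 : ℝ) < K := by linarith
  apply intervalIntegral.intervalIntegral_pos_of_pos_on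
  · apply ContinuousOn.intervalIntegrable
    apply ContinuousOn.mul (by fun_prop)
    apply ContinuousOn.rpow_const continuousOn_id
    intro x hx
    rw [Set.uIcc_of_le (by linarith : (K:ℝ) ≤ (K:ℝ)+1)] at hx
    exact Or.inl (by nlinarith [hx.1] : x ≠ 0)
  · intro x hx
    have hxp : (0:ℝ) < x := by linarith [hx.1]
    have := Real.rpow_pos_of_pos hxp (δ - 2)
    nlinarith [hx.1]
  · linarith

theorem vonMangoldt_tail_bound (K : ℕ) (hK : 18 ≤ K) (δ : ℝ) (hδ : δ < 0)
    (hψ : ∀ u : ℝ, (K : ℝ) ≤ u →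
      u * (1 - 2.85 / Real.log K) ≤ ∑ k ∈ Finset.Icc 1 ⌊u⌋₊, Λ k ∧
      ∑ k ∈ Finset.Icc 1 ⌊u⌋₊, Λ k ≤ u * (1 + 2.85 / Real.log K)) :
    |∑' k : ℕ, (if K < k then Λ k / (k : ℝ) ^ (1 - δ) else 0)|
      < (K : ℝ) ^ δ / δ * (2.85 * (2 * δ - 1) / Real.log K - 1) := by
  have hK18 : (18 : ℝ) ≤ (K : ℝ) := by exact_mod_cast hK
  have hKpos : (0 : ℝ) < K := by linarith
  have hlog : 0 < Real.log K := Real.log_pos (by linarith)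
  set g : ℕ → ℝ := fun k => if K < k then Λ k / (k : ℝ) ^ (1 - δ) else 0 with hg
  have hgnn : ∀ k, 0 ≤ g k := by
    intro k
    rw [hg]
    simp only
    split
    · exact div_nonneg vonMangoldt_nonneg (Real.rpow_nonneg (Nat.cast_nonneg k) _)
    · exact le_rfl
  set M : ℝ := (1 - δ) * ((1 + 2.85 / Real.log K) *
      ∫ t in (K : ℝ)..((K : ℝ) + 1), (t - (K : ℝ)) * t ^ (δ - 2)) with hM
  have hMpos : 0 < M := by
    rw [hM]
    have h1 : (0:ℝ) < 1 - δ := by linarith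
    have h2 : (0:ℝ) < 1 + 2.85 / Real.log K := by positivity
    exact mul_pos h1 (mul_pos h2 (Dpos K hK δ hδ))
  have hpartial : ∀ n : ℕ, ∑ i ∈ Finset.range n, g i ≤
      (K : ℝ) ^ δ / δ * (2.85 * (2 * δ - 1) / Real.log K - 1) - M := by
    intro n
    set b : ℝ := max ((K:ℝ) + 1) n with hb
    have hb1 : (K:ℝ) + 1 ≤ b := le_max_left _ _
    have hbn : (n:ℝ) ≤ b := le_max_right _ _
    calc ∑ i ∈ Finset.range n, g i
        = ∑ i ∈ (Finset.range n).filter (fun i => K < i), Λ i / (i : ℝ) ^ (1 - δ) :=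
          (Finset.sum_filter _ _).symm
      _ = ∑ i ∈ (Finset.range n).filter (fun i => K < i), (i : ℝ) ^ (δ - 1) * Λ i := by
          apply Finset.sum_congr rfl
          intro i hi
          have hKi : K < i := (Finset.mem_filter.mp hi).2
          have hip : (0:ℝ) < i := by
            have : 0 < i := by omega
            exact_mod_cast this
          rw [div_eq_mul_inv, ← Real.rpow_neg hip.le, show -(1 - δ) = δ - 1 by ring,
            mul_comm]
      _ ≤ ∑ k ∈ Finset.Ioc K ⌊b⌋₊, (k : ℝ) ^ (δ - 1) * Λ k := by
          apply Finset.sum_le_sum_of_subset_of_nonneg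
          · intro i hi
            rw [Finset.mem_filter, Finset.mem_range] at hi
            rw [Finset.mem_Ioc]
            refine ⟨hi.2, ?_⟩
            have hin : i < n := hi.1
            have : n ≤ ⌊b⌋₊ := Nat.le_floor hbn
            omega
          · intro k _ _
            exact mul_nonneg (Real.rpow_nonneg (Nat.cast_nonneg k) _) vonMangoldt_nonneg
      _ ≤ _ := key_bound K hK δ hδ hψ b hb1
  have hsum : Summable g := summable_of_sum_range_le hgnn hpartial
  have htsum : ∑' k, g k ≤
      (K : ℝ) ^ δ / δ * (2.85 * (2 * δ - 1) / Real.log K - 1) - M :=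
    Real.tsum_le_of_sum_range_le hgnn hpartial
  rw [abs_of_nonneg (tsum_nonneg hgnn)]
  calc ∑' k, g k ≤ _ - M := htsum
    _ < _ := by linarith
end
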